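/- arXiv:2502.08613 — 5 statements merged into one kernel-verified Lean document; each statement's English description precedes it below -/
import Mathlib

section
/- Let E be the expectation under a probability measure, let dq be an ℝⁿ-valued random vector and φ ∈ ℝⁿ a vector such that E[exp(-φ·dq)] is finite, and let E^φ be the tilted probability measure with density dE^φ/dE = exp(-φ·dq)/E[exp(-φ·dq)]. Suppose E^φ satisfies the calibration condition E^φ[dq] = 0. Then for every probability measure Ē mutually absolutely continuous with E, with dq integrable under Ē, Ē[dq] = 0, and S[Ē|E^φ] finite, one has S[Ē|E] ≥ S[E^φ|E]; that is, among equivalent measures satisfying the calibration condition, the price measure E^φ has minimum entropy relative to the expectation measure E. -/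
open MeasureTheory

/-- The relative entropy `S[ν|μ] := E_μ[(dν/dμ) log (dν/dμ)]`. -/
noncomputable def relEntropy {Ω : Type*} [MeasurableSpace Ω] (ν μ : Measure Ω) : ℝ :=
  ∫ ω, (ν.rnDeriv μ ω).toReal * Real.log (ν.rnDeriv μ ω).toReal ∂μ

lemma sub_one_le_mul_log {x : ℝ} (hx : 0 ≤ x) : x - 1 ≤ x * Real.log x := by
  rcases hx.eq_or_lt with h | h
  · simp [← h]
  · have h1 : Real.log x⁻¹ ≤ x⁻¹ - 1 := Real.log_le_sub_one_of_pos (inv_pos.2 h)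
    rw [Real.log_inv] at h1
    have h2 : x * (1 - x⁻¹) ≤ x * Real.log x := by
      apply mul_le_mul_of_nonneg_left _ h.le
      linarith
    have h3 : x * (1 - x⁻¹) = x - 1 := by field_simp
    linarith

/-- Minimum relative entropy of the calibrated price measure: with `P^φ` the
exponentially tilted measure of density `exp (-φ·dq) / E[exp (-φ·dq)]` relative to `P`
satisfying the calibration condition `P^φ[dq] = 0`, every equivalent probability measure
`Q` with `Q[dq] = 0` satisfies `S[Q|P] ≥ S[P^φ|P]`. -/
theorem relEntropy_tilted_min {Ω : Type*} [MeasurableSpace Ω] {n : ℕ}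
    (P : Measure Ω) [IsProbabilityMeasure P] (dq : Ω → Fin n → ℝ) (φ : Fin n → ℝ)
    (hint : Integrable (fun ω => Real.exp (-(∑ i, φ i * dq ω i))) P)
    (hdqPφ : ∀ i, Integrable (fun ω => dq ω i)
      (P.tilted (fun ω => -(∑ i, φ i * dq ω i))))
    (hcal : ∀ i, (∫ ω, dq ω i ∂(P.tilted (fun ω => -(∑ i, φ i * dq ω i)))) = 0)
    (Q : Measure Ω) [IsProbabilityMeasure Q] (hQP : Q ≪ P) (hPQ : P ≪ Q)
    (hdqQ : ∀ i, Integrable (fun ω => dq ω i) Q)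
    (hQ0 : ∀ i, (∫ ω, dq ω i ∂Q) = 0)
    (hS₂ : Integrable
      (fun ω => (Q.rnDeriv (P.tilted (fun ω => -(∑ i, φ i * dq ω i))) ω).toReal *
        Real.log ((Q.rnDeriv (P.tilted (fun ω => -(∑ i, φ i * dq ω i))) ω).toReal))
      (P.tilted (fun ω => -(∑ i, φ i * dq ω i)))) :
    relEntropy (P.tilted (fun ω => -(∑ i, φ i * dq ω i))) P ≤ relEntropy Q P := by
  set f : Ω → ℝ := fun ω => -(∑ i, φ i * dq ω i) with hf
  set Pφ : Measure Ω := P.tilted f with hPφdef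
  haveI : IsProbabilityMeasure Pφ := isProbabilityMeasure_tilted hint
  set Z : ℝ := ∫ ω, Real.exp (f ω) ∂P with hZ
  have hZpos : 0 < Z := integral_exp_pos hint
  have hfP : AEMeasurable f P := Real.aemeasurable_of_aemeasurable_exp hint.1.aemeasurable
  have hPφP : Pφ ≪ P := tilted_absolutelyContinuous P f
  have hPPφ : P ≪ Pφ := absolutelyContinuous_tilted hint
  have hQPφ : Q ≪ Pφ := hQP.trans hPPφ
  -- integrability of f
  have hfPφ : Integrable f Pφ := by
    refine Integrable.neg (integrable_finset_sum _ fun i _ => ?_)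
    exact (hdqPφ i).const_mul (φ i)
  have hfQ : Integrable f Q := by
    refine Integrable.neg (integrable_finset_sum _ fun i _ => ?_)
    exact (hdqQ i).const_mul (φ i)
  -- expectations of f vanish
  have hfPφ0 : ∫ ω, f ω ∂Pφ = 0 := by
    rw [hf]
    rw [integral_neg, integral_finset_sum _ (fun i _ => (hdqPφ i).const_mul (φ i))]
    simp [integral_const_mul, hcal]
  have hfQ0 : ∫ ω, f ω ∂Q = 0 := by
    rw [hf]
    rw [integral_neg, integral_finset_sum _ (fun i _ => (hdqQ i).const_mul (φ i))]
    simp [integral_const_mul, hQ0]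
  -- ∫ (f - log Z) under any of the probability measures
  have hkeyPφ : ∫ ω, (f ω - Real.log Z) ∂Pφ = -Real.log Z := by
    rw [integral_sub hfPφ (integrable_const _), hfPφ0, integral_const]
    simp
  have hkeyQ : ∫ ω, (f ω - Real.log Z) ∂Q = -Real.log Z := by
    rw [integral_sub hfQ (integrable_const _), hfQ0, integral_const]
    simp
  -- relEntropy Pφ P = - log Z
  have hE1 : relEntropy Pφ P = -Real.log Z := by
    have hae : (fun ω => (Pφ.rnDeriv P ω).toReal * Real.log (Pφ.rnDeriv P ω).toReal)
        =ᵐ[P] fun ω => (Real.exp (f ω) / Z) • (f ω - Real.log Z) := by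
      filter_upwards [rnDeriv_tilted_left_self (μ := P) hfP] with ω hω
      rw [hω, ENNReal.toReal_ofReal (by positivity), smul_eq_mul,
        Real.log_div (Real.exp_pos _).ne' hZpos.ne', Real.log_exp]
    rw [relEntropy, integral_congr_ae hae, ← integral_tilted f (fun ω => f ω - Real.log Z),
      ← hPφdef, hkeyPφ]
  rw [hE1]
  -- decomposition of relEntropy Q P
  set g : Ω → ℝ := fun ω => (Q.rnDeriv Pφ ω).toReal with hg
  have hgint : Integrable (fun ω => g ω * (f ω - Real.log Z)) Pφ := by
    have := (integrable_rnDeriv_smul_iff (μ := Q) (ν := Pφ) hQPφ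
      (f := fun ω => f ω - Real.log Z)).mpr (hfQ.sub (integrable_const _))
    simpa [hg, smul_eq_mul] using this
  have hae2 : (fun ω => (Q.rnDeriv P ω).toReal * Real.log (Q.rnDeriv P ω).toReal)
      =ᵐ[P] fun ω => (Real.exp (f ω) / Z) •
        (g ω * Real.log (g ω) + g ω * (f ω - Real.log Z)) := by
    filter_upwards [Measure.rnDeriv_mul_rnDeriv (κ := P) hQPφ,
      rnDeriv_tilted_left_self (μ := P) hfP,
      hPPφ.ae_le (Measure.rnDeriv_lt_top Q Pφ)] with ω h1 h2 h3
    have hc : (0:ℝ) < Real.exp (f ω) / Z := by positivity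
    rw [← h1, Pi.mul_apply, h2, ENNReal.toReal_mul, ENNReal.toReal_ofReal hc.le]
    simp only [hg, smul_eq_mul]
    rcases eq_or_lt_of_le (ENNReal.toReal_nonneg : (0:ℝ) ≤ (Q.rnDeriv Pφ ω).toReal) with h0 | h0
    · simp [← h0]
    · rw [Real.log_mul h0.ne' hc.ne',
        Real.log_div (Real.exp_pos _).ne' hZpos.ne', Real.log_exp]
      ring
  have hE2 : relEntropy Q P
      = (∫ ω, g ω * Real.log (g ω) ∂Pφ) + -Real.log Z := by
    rw [relEntropy, integral_congr_ae hae2,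
      ← integral_tilted f (fun ω => g ω * Real.log (g ω) + g ω * (f ω - Real.log Z)),
      ← hPφdef, integral_add hS₂ hgint]
    congr 1
    have := integral_rnDeriv_smul (μ := Q) (ν := Pφ) hQPφ
      (f := fun ω => f ω - Real.log Z)
    simp only [smul_eq_mul] at this
    rw [hg]
    rw [this, hkeyQ]
  rw [hE2]
  -- nonnegativity of ∫ g log g dPφ
  have hgint1 : Integrable g Pφ := Measure.integrable_toReal_rnDeriv
  have hgsum : ∫ ω, g ω ∂Pφ = 1 := by
    rw [hg, Measure.integral_toReal_rnDeriv hQPφ]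
    simp
  have hnonneg : 0 ≤ ∫ ω, g ω * Real.log (g ω) ∂Pφ := by
    have hmono : ∫ ω, (g ω - 1) ∂Pφ ≤ ∫ ω, g ω * Real.log (g ω) ∂Pφ := by
      refine integral_mono (hgint1.sub (integrable_const _)) hS₂ fun ω => ?_
      exact sub_one_le_mul_log ENNReal.toReal_nonneg
    rw [integral_sub hgint1 (integrable_const _), hgsum, integral_const] at hmono
    simpa using hmono
  linarith
end

section
/- Poincaré's integral formula for the matrix exponential: for any two square complex matrices X and Y of the same size, 1 − exp(−(X+Y))·exp(X) = ∫₀¹ exp(−s(X+Y))·Y·exp(sX) ds, where 1 denotes the identity matrix and the integral is the Bochner integral of the matrix-valued integrand over s ∈ [0,1]. -/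
open NormedSpace intervalIntegral

attribute [local instance] Matrix.linftyOpNormedAddCommGroup Matrix.linftyOpNormedSpace
  Matrix.linftyOpNormedRing Matrix.linftyOpNormedAlgebra

/-- Poincaré's integral formula for the matrix exponential:
`1 − exp(−(X+Y))·exp(X) = ∫₀¹ exp(−s(X+Y))·Y·exp(sX) ds`. -/
theorem poincare_matrix_exp {m : ℕ} (X Y : Matrix (Fin m) (Fin m) ℂ) :
    (1 : Matrix (Fin m) (Fin m) ℂ) - exp (-(X + Y)) * exp X =
      ∫ s in (0:ℝ)..1, exp ((-s) • (X + Y)) * Y * exp (s • X) := by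
  set A := X + Y with hA
  letI : TopologicalSpace (Matrix (Fin m) (Fin m) ℂ) :=
    (Matrix.linftyOpNormedAddCommGroup (m := Fin m) (n := Fin m) (α := ℂ)).toUniformSpace.toTopologicalSpace
  have hexp : (exp : Matrix (Fin m) (Fin m) ℂ → _) = exp := rfl
  have key : ∀ s : ℝ, HasDerivAt (fun u : ℝ => exp ((-u) • A) * exp (u • X))
      (-(exp ((-s) • A) * Y * exp (s • X))) s := by
    intro s
    have h1 : HasDerivAt (fun u : ℝ => exp ((-u) • A)) (-(A * exp ((-s) • A))) s := by
      have := (hasDerivAt_exp_smul_const' (𝕂 := ℝ) A (-s)).scomp s (hasDerivAt_neg s)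
      simpa [hexp, Function.comp_def] using this
    have h2 : HasDerivAt (fun u : ℝ => exp (u • X)) (X * exp (s • X)) s := by
      have := hasDerivAt_exp_smul_const' (𝕂 := ℝ) X s
      simpa [hexp] using this
    have hm := h1.mul h2
    refine hm.congr_deriv ?_
    have hcomm : exp ((-s) • A) * A = A * exp ((-s) • A) :=
      (((Commute.refl A).smul_left (-s)).exp_left).eq
    have hcomm2 : exp (s • X) * X = X * exp (s • X) :=
      (((Commute.refl X).smul_left s).exp_left).eq
    rw [← hcomm, hA]
    noncomm_ring
  have hcont : Continuous fun s : ℝ => exp ((-s) • A) * Y * exp (s • X) := by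
    have hc : Continuous (exp : Matrix (Fin m) (Fin m) ℂ → _) := exp_continuous
    fun_prop
  have hint : IntervalIntegrable (fun s : ℝ => -(exp ((-s) • A) * Y * exp (s • X)))
      MeasureTheory.volume 0 1 := (hcont.neg).intervalIntegrable 0 1
  have heq := intervalIntegral.integral_eq_sub_of_hasDerivAt
    (f := fun u : ℝ => exp ((-u) • A) * exp (u • X))
    (fun s _ => key s) hint
  rw [intervalIntegral.integral_neg] at heq
  simp only [neg_smul, one_smul, neg_zero, zero_smul, exp_zero, one_mul, mul_one] at heq
  rw [neg_eq_iff_eq_neg] at heq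
  simp only [neg_smul]
  erw [heq]
  abel
end

section
/- The first-order perturbation of the trace of the matrix exponential is given by the trace pairing with the exponential: for square complex matrices X and Y of the same size, the function t ↦ trace(exp(X + t·Y)) of the real variable t has derivative at t = 0 equal to trace(exp(X)·Y). -/
open NormedSpace
open scoped Nat

attribute [local instance] Matrix.linftyOpNormedAddCommGroup Matrix.linftyOpNormedSpace
  Matrix.linftyOpNormedRing Matrix.linftyOpNormedAlgebra

noncomputable def my_traceCLM (m : ℕ) : Matrix (Fin m) (Fin m) ℂ →L[ℂ] ℂ :=
  LinearMap.toContinuousLinearMap (Matrix.traceLinearMap (Fin m) ℂ ℂ)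

lemma my_norm_pow_mul_le {m : ℕ} (A Y : Matrix (Fin m) (Fin m) ℂ) (k : ℕ) :
    ‖A ^ k * Y‖ ≤ ‖A‖ ^ k * ‖Y‖ := by
  induction k with
  | zero => simp
  | succ k ih =>
    calc ‖A ^ (k + 1) * Y‖ = ‖A * (A ^ k * Y)‖ := by rw [pow_succ', mul_assoc]
      _ ≤ ‖A‖ * ‖A ^ k * Y‖ := norm_mul_le _ _
      _ ≤ ‖A‖ * (‖A‖ ^ k * ‖Y‖) := mul_le_mul_of_nonneg_left ih (norm_nonneg _)
      _ = ‖A‖ ^ (k + 1) * ‖Y‖ := by ring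

lemma my_hasDerivAt_line {m : ℕ} (X Y : Matrix (Fin m) (Fin m) ℂ) (x : ℝ) :
    HasDerivAt (fun t : ℝ => X + (t : ℂ) • Y) Y x := by
  have h1 : HasDerivAt (fun t : ℝ => (t : ℂ)) 1 x := Complex.ofRealCLM.hasDerivAt
  have h2 := (h1.smul_const Y).const_add X
  simp only [one_smul] at h2
  exact h2

lemma my_hasDerivAt_pow {m : ℕ} (X Y : Matrix (Fin m) (Fin m) ℂ) (x : ℝ) (n : ℕ) :
    HasDerivAt (fun t : ℝ => (X + (t : ℂ) • Y) ^ n)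
      (∑ i ∈ Finset.range n, (X + (x : ℂ) • Y) ^ i * Y * (X + (x : ℂ) • Y) ^ (n - 1 - i)) x := by
  induction n with
  | zero =>
    simp only [pow_zero, Finset.range_zero, Finset.sum_empty]
    exact hasDerivAt_const x _
  | succ n ih =>
    have := ih.mul (my_hasDerivAt_line X Y x)
    simp only [Pi.mul_def, ← pow_succ] at this
    convert this using 1
    · rfl
    · rfl
    · rfl
    rw [Finset.sum_range_succ, Finset.sum_mul]
    congr 1
    · refine Finset.sum_congr rfl fun i hi => ?_
      rw [Finset.mem_range] at hi
      have h : n + 1 - 1 - i = n - 1 - i + 1 := by omega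
      rw [h, pow_succ, ← mul_assoc]
    · simp

lemma my_hasDerivAt_trace_pow {m : ℕ} (X Y : Matrix (Fin m) (Fin m) ℂ) (x : ℝ) (n : ℕ) :
    HasDerivAt (fun t : ℝ => Matrix.trace ((X + (t : ℂ) • Y) ^ n))
      ((n : ℂ) * Matrix.trace ((X + (x : ℂ) • Y) ^ (n - 1) * Y)) x := by
  have h := (((my_traceCLM m).restrictScalars ℝ).hasFDerivAt.comp_hasDerivAt x
    (my_hasDerivAt_pow X Y x n))
  convert h using 1
  · rfl
  · rfl
  have hT : ∀ M : Matrix (Fin m) (Fin m) ℂ,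
      (ContinuousLinearMap.restrictScalars ℝ (my_traceCLM m)) M = Matrix.trace M := fun _ => rfl
  erw [hT, Matrix.trace_sum]
  have : ∀ i ∈ Finset.range n,
      Matrix.trace ((X + (x : ℂ) • Y) ^ i * Y * (X + (x : ℂ) • Y) ^ (n - 1 - i))
        = Matrix.trace ((X + (x : ℂ) • Y) ^ (n - 1) * Y) := by
    intro i hi
    rw [Finset.mem_range] at hi
    rw [Matrix.trace_mul_comm, ← mul_assoc, ← pow_add]
    congr 3
    omega
  rw [Finset.sum_congr rfl this, Finset.sum_const, Finset.card_range, nsmul_eq_mul]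

/-- First-order perturbation of the trace of the matrix exponential: the function
`t ↦ trace (exp (X + t·Y))` has derivative `trace (exp X · Y)` at `t = 0`. -/
theorem hasDerivAt_trace_exp {m : ℕ} (X Y : Matrix (Fin m) (Fin m) ℂ) :
    HasDerivAt (fun t : ℝ => Matrix.trace (exp (X + (t : ℂ) • Y)))
      (Matrix.trace (exp X * Y)) 0 := by
  set A : ℝ → Matrix (Fin m) (Fin m) ℂ := fun t => X + (t : ℂ) • Y with hA
  set g : ℕ → ℝ → ℂ := fun n t => ((n ! : ℂ))⁻¹ • Matrix.trace ((A t) ^ n) with hg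
  set g' : ℕ → ℝ → ℂ :=
    fun n y => ((n ! : ℂ))⁻¹ • ((n : ℂ) * Matrix.trace ((A y) ^ (n - 1) * Y)) with hg'
  set r : ℝ := ‖X‖ + ‖Y‖ with hr
  set C : ℝ := @norm _ (@ContinuousLinearMap.hasOpNorm _ _ _ _ Matrix.linftyOpSeminormedAddCommGroup
    _ _ _ _ _ _) (my_traceCLM m) with hC
  set u : ℕ → ℝ := fun n => C * ‖Y‖ * ((n : ℝ) * r ^ (n - 1) / n !) with hu
  have hA0 : A 0 = X := by simp [hA]
  have hr0 : (0 : ℝ) ≤ r := by positivity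
  -- summability of the bound
  have hu_sum : Summable u := by
    refine (summable_nat_add_iff 1).mp ?_
    have : (fun n : ℕ => u (n + 1)) = fun n : ℕ => C * ‖Y‖ * (r ^ n / n !) := by
      funext n
      simp only [hu, Nat.add_sub_cancel, Nat.factorial_succ, Nat.cast_mul, Nat.cast_add,
        Nat.cast_one]
      have h1 : ((n : ℝ) + 1) ≠ 0 := by positivity
      have h2 : (n ! : ℝ) ≠ 0 := by positivity
      field_simp
    rw [this]
    exact (Real.summable_pow_div_factorial r).mul_left _
  -- each term has the claimed derivative
  have hderiv : ∀ n (y : ℝ), HasDerivAt (g n) (g' n y) y := fun n y =>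
    (my_hasDerivAt_trace_pow X Y y n).const_smul ((n ! : ℂ))⁻¹
  -- bound on the derivatives on the unit ball
  have hbound : ∀ n (y : ℝ), y ∈ Metric.ball (0 : ℝ) 1 → ‖g' n y‖ ≤ u n := by
    intro n y hy
    have hAy : ‖A y‖ ≤ r := by
      calc ‖A y‖ ≤ ‖X‖ + ‖(y : ℂ) • Y‖ := norm_add_le _ _
        _ ≤ ‖X‖ + ‖Y‖ := by
            rw [norm_smul]
            have : ‖(y : ℂ)‖ ≤ 1 := by
              rw [Complex.norm_real]
              have := mem_ball_iff_norm.mp hy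
              simpa using this.le
            nlinarith [norm_nonneg Y]
    have htr : ‖Matrix.trace ((A y) ^ (n - 1) * Y)‖ ≤ C * (r ^ (n - 1) * ‖Y‖) := by
      calc ‖Matrix.trace ((A y) ^ (n - 1) * Y)‖
          ≤ C * ‖(A y) ^ (n - 1) * Y‖ := by
              letI : SeminormedAddCommGroup (Matrix (Fin m) (Fin m) ℂ) :=
                Matrix.linftyOpSeminormedAddCommGroup
              exact (my_traceCLM m).le_opNorm _
        _ ≤ C * (‖A y‖ ^ (n - 1) * ‖Y‖) := by
            refine mul_le_mul_of_nonneg_left ?_ (norm_nonneg _)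
            exact my_norm_pow_mul_le _ _ _
        _ ≤ C * (r ^ (n - 1) * ‖Y‖) := by
            refine mul_le_mul_of_nonneg_left ?_ (norm_nonneg _)
            exact mul_le_mul_of_nonneg_right
              (pow_le_pow_left₀ (norm_nonneg _) hAy _) (norm_nonneg _)
    have : ‖g' n y‖ = ((n !: ℝ))⁻¹ * ((n : ℝ) * ‖Matrix.trace ((A y) ^ (n - 1) * Y)‖) := by
      simp [hg', norm_smul, norm_mul]
    rw [this, hu]
    have h2 : (0 : ℝ) ≤ ((n !: ℝ))⁻¹ := by positivity
    have h3 : (0 : ℝ) ≤ (n : ℝ) := by positivity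
    calc ((n !: ℝ))⁻¹ * ((n : ℝ) * ‖Matrix.trace ((A y) ^ (n - 1) * Y)‖)
        ≤ ((n !: ℝ))⁻¹ * ((n : ℝ) * (C * (r ^ (n - 1) * ‖Y‖))) := by
          refine mul_le_mul_of_nonneg_left (mul_le_mul_of_nonneg_left htr h3) h2
      _ = C * ‖Y‖ * ((n : ℝ) * r ^ (n - 1) / n !) := by
          field_simp
  -- summability at the base point
  have hg0 : Summable fun n => g n 0 := by
    have h1 : Summable fun n : ℕ => ((n ! : ℂ))⁻¹ • X ^ n := expSeries_summable' X
    have h2 := h1.map (my_traceCLM m).toLinearMap.toAddMonoidHom (my_traceCLM m).continuous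
    refine h2.congr fun n => ?_
    show Matrix.trace (((n ! : ℂ))⁻¹ • X ^ n) = _
    rw [Matrix.trace_smul]
    simp [hg, hA0]
  -- the sum of derivatives is summable
  have hg'_sum : Summable fun n => g' n 0 := by
    refine Summable.of_norm_bounded hu_sum fun n => ?_
    exact hbound n 0 (Metric.mem_ball_self one_pos)
  -- derivative of the tsum
  have key : HasDerivAt (fun t : ℝ => ∑' n, g n t) (∑' n, g' n 0) 0 := by
    refine hasDerivAt_tsum_of_isPreconnected hu_sum Metric.isOpen_ball
      (convex_ball (0 : ℝ) 1).isPreconnected (fun n y _ => hderiv n y) hbound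
      (Metric.mem_ball_self one_pos) hg0 (Metric.mem_ball_self one_pos)
  -- the tsum equals the trace of the exponential
  have hfun : (fun t : ℝ => Matrix.trace (exp (A t))) = fun t => ∑' n, g n t := by
    funext t
    rw [exp_eq_tsum ℂ]
    have hs : Summable fun n : ℕ => ((n ! : ℂ))⁻¹ • (A t) ^ n := expSeries_summable' (A t)
    have := (my_traceCLM m).map_tsum hs
    calc Matrix.trace (∑' n : ℕ, ((n ! : ℂ))⁻¹ • (A t) ^ n)
        = (my_traceCLM m) (∑' n : ℕ, ((n ! : ℂ))⁻¹ • (A t) ^ n) := rfl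
      _ = ∑' n : ℕ, (my_traceCLM m) (((n ! : ℂ))⁻¹ • (A t) ^ n) := this
      _ = ∑' n : ℕ, g n t := by
          refine tsum_congr fun n => ?_
          show Matrix.trace (((n ! : ℂ))⁻¹ • (A t) ^ n) = _
          rw [Matrix.trace_smul]
  -- the derivative value equals trace (exp X * Y)
  have hval : (∑' n, g' n 0) = Matrix.trace (exp X * Y) := by
    rw [hg'_sum.tsum_eq_zero_add]
    have hzero : g' 0 0 = 0 := by simp [hg']
    rw [hzero, zero_add]
    have hterm : ∀ n : ℕ, g' (n + 1) 0 = ((n ! : ℂ))⁻¹ • Matrix.trace (X ^ n * Y) := by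
      intro n
      simp only [hg', hA0, Nat.add_sub_cancel]
      rw [smul_eq_mul, smul_eq_mul, ← mul_assoc]
      congr 1
      rw [Nat.factorial_succ]
      push_cast
      have h1 : ((n : ℂ) + 1) ≠ 0 := Nat.cast_add_one_ne_zero n
      have h2 : ((n !) : ℂ) ≠ 0 := by
        exact_mod_cast Nat.cast_ne_zero.mpr n.factorial_ne_zero
      field_simp
    simp only [hterm]
    -- now compute trace (exp X * Y)
    rw [exp_eq_tsum ℂ]
    have hs : Summable fun n : ℕ => ((n ! : ℂ))⁻¹ • X ^ n := expSeries_summable' X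
    set T2 : Matrix (Fin m) (Fin m) ℂ →L[ℂ] ℂ :=
      LinearMap.toContinuousLinearMap
        ((Matrix.traceLinearMap (Fin m) ℂ ℂ).comp (LinearMap.mulRight ℂ Y)) with hT2
    have hT2app : ∀ M : Matrix (Fin m) (Fin m) ℂ, T2 M = Matrix.trace (M * Y) := fun _ => rfl
    calc (∑' n : ℕ, ((n ! : ℂ))⁻¹ • Matrix.trace (X ^ n * Y))
        = ∑' n : ℕ, T2 (((n ! : ℂ))⁻¹ • X ^ n) := by
          refine tsum_congr fun n => ?_
          rw [hT2app, Matrix.smul_mul, Matrix.trace_smul]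
      _ = T2 (∑' n : ℕ, ((n ! : ℂ))⁻¹ • X ^ n) := (T2.map_tsum hs).symm
      _ = Matrix.trace ((∑' n : ℕ, ((n ! : ℂ))⁻¹ • X ^ n) * Y) := hT2app _
  rw [hfun, ← hval]
  exact key
end

section
/- In the two-state quantum model with maximal rotation between the eigenbases, the spread portfolio has eigenvalues with square-root convexity in the strike: let Q₁, Q₂, B₁, B₂, k be real numbers, set Q̄ := (Q₁+Q₂)/2, Q̂ := (Q₁−Q₂)/2, B̄ := (B₁+B₂)/2, B̂ := (B₁−B₂)/2, let Q = diag(Q₁,Q₂) and B = diag(B₁,B₂) be 2×2 diagonal matrices, and let U be the 2×2 unitary with all entries of modulus 1/√2 given by U_{jk} = (1/√2)·exp(2πi·jk/2). Then the Hermitian matrix U·Q·U⁻¹ − k·B has eigenvalues (Q̄ − kB̄) + √(Q̂² + k²B̂²) and (Q̄ − kB̄) − √(Q̂² + k²B̂²); consequently the normalised trace of its positive part equals (1/2)·((Q̄−kB̄) + √(Q̂²+k²B̂²))⁺ + (1/2)·((Q̄−kB̄) − √(Q̂²+k²B̂²))⁺. -/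
open Matrix

/-- The positive part `M⁺ := Σ (λᵢ)⁺ Pᵢ` of a Hermitian matrix, formed by applying
`x ↦ max x 0` to the eigenvalues in a spectral decomposition. -/
noncomputable def hermPosPart {n : Type*} [Fintype n] [DecidableEq n]
    {M : Matrix n n ℂ} (hM : M.IsHermitian) : Matrix n n ℂ :=
  (hM.eigenvectorUnitary : Matrix n n ℂ) *
    Matrix.diagonal (fun i => ((max (hM.eigenvalues i) 0 : ℝ) : ℂ)) *
    star (hM.eigenvectorUnitary : Matrix n n ℂ)

lemma trace_hermPosPart {n : Type*} [Fintype n] [DecidableEq n]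
    {M : Matrix n n ℂ} (hM : M.IsHermitian) :
    (hermPosPart hM).trace = ∑ i, ((max (hM.eigenvalues i) 0 : ℝ) : ℂ) := by
  rw [hermPosPart, Matrix.trace_mul_comm, ← Matrix.mul_assoc,
    (Matrix.mem_unitaryGroup_iff').mp (hM.eigenvectorUnitary).2, one_mul,
    Matrix.trace_diagonal]

lemma trace_eq_sum_eig {n : Type*} [Fintype n] [DecidableEq n]
    {M : Matrix n n ℂ} (hM : M.IsHermitian) :
    M.trace = ∑ i, ((hM.eigenvalues i : ℝ) : ℂ) := by
  nth_rewrite 1 [hM.spectral_theorem]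
  rw [Unitary.conjStarAlgAut_apply, Matrix.trace_mul_comm, ← Matrix.mul_assoc,
    (Matrix.mem_unitaryGroup_iff').mp (hM.eigenvectorUnitary).2, one_mul,
    Matrix.trace_diagonal]
  rfl

set_option maxHeartbeats 1000000 in
/-- In the two-state quantum model with maximal rotation between the eigenbases, the
spread portfolio `U·Q·U⁻¹ − k·B` is Hermitian with eigenvalues
`(Q̄ − kB̄) ± √(Q̂² + k²B̂²)`, and the normalised trace of its positive part is
`(1/2)((Q̄−kB̄) + √(Q̂²+k²B̂²))⁺ + (1/2)((Q̄−kB̄) − √(Q̂²+k²B̂²))⁺`. -/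
theorem quantum_spread_eigenvalues (Q₁ Q₂ B₁ B₂ k : ℝ)
    (Qbar Qhat Bbar Bhat : ℝ)
    (hQbar : Qbar = (Q₁ + Q₂) / 2) (hQhat : Qhat = (Q₁ - Q₂) / 2)
    (hBbar : Bbar = (B₁ + B₂) / 2) (hBhat : Bhat = (B₁ - B₂) / 2)
    (Q B U : Matrix (Fin 2) (Fin 2) ℂ)
    (hQ : Q = Matrix.diagonal ![(Q₁ : ℂ), (Q₂ : ℂ)])
    (hB : B = Matrix.diagonal ![(B₁ : ℂ), (B₂ : ℂ)])
    (hU : U = Matrix.of fun j k : Fin 2 =>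
      ((1 / Real.sqrt 2 : ℝ) : ℂ) *
        Complex.exp (2 * Real.pi * Complex.I * ((j : ℕ) * (k : ℕ)) / 2)) :
    ∃ hM : (U * Q * U⁻¹ - (k : ℂ) • B).IsHermitian,
      ({hM.eigenvalues 0, hM.eigenvalues 1} : Multiset ℝ) =
        ({(Qbar - k * Bbar) + Real.sqrt (Qhat ^ 2 + k ^ 2 * Bhat ^ 2),
          (Qbar - k * Bbar) - Real.sqrt (Qhat ^ 2 + k ^ 2 * Bhat ^ 2)} : Multiset ℝ) ∧
      (1 / 2 : ℂ) * Matrix.trace (hermPosPart hM) =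
        (((1 / 2) * max ((Qbar - k * Bbar) + Real.sqrt (Qhat ^ 2 + k ^ 2 * Bhat ^ 2)) 0 +
          (1 / 2) * max ((Qbar - k * Bbar) - Real.sqrt (Qhat ^ 2 + k ^ 2 * Bhat ^ 2)) 0 : ℝ) : ℂ) := by
  subst hQbar hQhat hBbar hBhat
  -- explicit form of the matrix
  have hMeq : U * Q * U⁻¹ - (k : ℂ) • B =
      !![(((Q₁ + Q₂) / 2 - k*B₁ : ℝ) : ℂ), (((Q₁ - Q₂) / 2 : ℝ) : ℂ);
         (((Q₁ - Q₂) / 2 : ℝ) : ℂ), (((Q₁ + Q₂) / 2 - k*B₂ : ℝ) : ℂ)] := by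
    set c : ℂ := ((1 / Real.sqrt 2 : ℝ) : ℂ) with hc
    have h2 : c * c = 1 / 2 := by
      rw [hc]; norm_cast
      rw [div_mul_div_comm, one_mul, Real.mul_self_sqrt] <;> norm_num
    have hUex : U = !![c, c; c, -c] := by
      rw [hU]
      ext i j
      fin_cases i <;> fin_cases j <;>
        simp [Complex.exp_zero] <;>
        norm_num <;>
        rw [show (2 : ℂ) * Real.pi * Complex.I / 2 = Real.pi * Complex.I by ring,
          Complex.exp_pi_mul_I] <;> ring
    have hUU : U * U = 1 := by
      rw [hUex]
      ext i j
      fin_cases i <;> fin_cases j <;>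
        simp [Matrix.mul_apply, Fin.sum_univ_two] <;> linear_combination 2 * h2
    have hQex : Q = !![(Q₁ : ℂ), 0; 0, (Q₂ : ℂ)] := by
      rw [hQ]; ext i j; fin_cases i <;> fin_cases j <;> simp [Matrix.diagonal]
    have hBex : B = !![(B₁ : ℂ), 0; 0, (B₂ : ℂ)] := by
      rw [hB]; ext i j; fin_cases i <;> fin_cases j <;> simp [Matrix.diagonal]
    rw [Matrix.inv_eq_right_inv hUU, hUex, hQex, hBex]
    ext i j
    fin_cases i <;> fin_cases j <;>
      simp [Matrix.mul_apply, Fin.sum_univ_two] <;>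
      push_cast <;> first
      | linear_combination (Q₁ + Q₂) * h2
      | linear_combination (Q₁ - Q₂) * h2
      | linear_combination (Q₂ - Q₁) * h2
      | linear_combination 2 * Q₂ * h2
      | linear_combination (Q₁ + 3 * Q₂) * h2
  have hM : (U * Q * U⁻¹ - (k : ℂ) • B).IsHermitian := by
    rw [Matrix.IsHermitian, hMeq]
    ext i j
    fin_cases i <;> fin_cases j <;>
      simp [Matrix.conjTranspose_apply, Complex.conj_ofReal]
  refine ⟨hM, ?_⟩
  have hr2 : Real.sqrt (((Q₁ - Q₂) / 2) ^ 2 + k ^ 2 * ((B₁ - B₂) / 2) ^ 2) ^ 2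
      = ((Q₁ - Q₂) / 2) ^ 2 + k ^ 2 * ((B₁ - B₂) / 2) ^ 2 :=
    Real.sq_sqrt (by positivity)
  set r : ℝ := Real.sqrt (((Q₁ - Q₂) / 2) ^ 2 + k ^ 2 * ((B₁ - B₂) / 2) ^ 2) with hrdef
  -- sum of eigenvalues
  have hE : ((hM.eigenvalues 0 : ℝ) : ℂ) + ((hM.eigenvalues 1 : ℝ) : ℂ)
      = (((Q₁ + Q₂) / 2 - k*B₁ : ℝ) : ℂ) + (((Q₁ + Q₂) / 2 - k*B₂ : ℝ) : ℂ) := by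
    have h := trace_eq_sum_eig hM
    rw [Fin.sum_univ_two] at h
    conv at h => lhs; rw [hMeq, Matrix.trace_fin_two_of]
    exact h.symm
  have hsum : hM.eigenvalues 0 + hM.eigenvalues 1
      = ((Q₁ + Q₂) / 2 - k*B₁) + ((Q₁ + Q₂) / 2 - k*B₂) := by exact_mod_cast hE
  -- product of eigenvalues
  have hD : ((hM.eigenvalues 0 : ℝ) : ℂ) * ((hM.eigenvalues 1 : ℝ) : ℂ)
      = (((Q₁ + Q₂) / 2 - k*B₁ : ℝ) : ℂ) * (((Q₁ + Q₂) / 2 - k*B₂ : ℝ) : ℂ)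
        - (((Q₁ - Q₂) / 2 : ℝ) : ℂ) * (((Q₁ - Q₂) / 2 : ℝ) : ℂ) := by
    have h := hM.det_eq_prod_eigenvalues
    rw [Fin.prod_univ_two] at h
    conv at h => lhs; rw [hMeq, Matrix.det_fin_two_of]
    exact h.symm
  have hprod : hM.eigenvalues 0 * hM.eigenvalues 1
      = ((Q₁ + Q₂) / 2 - k*B₁) * ((Q₁ + Q₂) / 2 - k*B₂)
        - ((Q₁ - Q₂) / 2) * ((Q₁ - Q₂) / 2) := by exact_mod_cast hD
  have hsum' : hM.eigenvalues 0 + hM.eigenvalues 1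
      = (((Q₁ + Q₂) / 2 - k * ((B₁ + B₂) / 2)) + r)
        + (((Q₁ + Q₂) / 2 - k * ((B₁ + B₂) / 2)) - r) := by rw [hsum]; ring
  have hprod' : hM.eigenvalues 0 * hM.eigenvalues 1
      = (((Q₁ + Q₂) / 2 - k * ((B₁ + B₂) / 2)) + r)
        * (((Q₁ + Q₂) / 2 - k * ((B₁ + B₂) / 2)) - r) := by
    rw [hprod]; linear_combination hr2
  have h0 : hM.eigenvalues 0 = ((Q₁ + Q₂) / 2 - k * ((B₁ + B₂) / 2)) + r
      ∨ hM.eigenvalues 0 = ((Q₁ + Q₂) / 2 - k * ((B₁ + B₂) / 2)) - r := by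
    have hz : (hM.eigenvalues 0 - ((((Q₁ + Q₂) / 2 - k * ((B₁ + B₂) / 2)) + r)))
        * (hM.eigenvalues 0 - ((((Q₁ + Q₂) / 2 - k * ((B₁ + B₂) / 2)) - r))) = 0 := by
      linear_combination hM.eigenvalues 0 * hsum' - hprod'
    rcases mul_eq_zero.mp hz with h | h
    · exact Or.inl (by linarith [sub_eq_zero.mp h])
    · exact Or.inr (by linarith [sub_eq_zero.mp h])
  have htr := trace_hermPosPart hM
  rw [Fin.sum_univ_two] at htr
  rcases h0 with h | h
  · have h1 : hM.eigenvalues 1 = ((Q₁ + Q₂) / 2 - k * ((B₁ + B₂) / 2)) - r := by linarith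
    constructor
    · rw [h, h1]
    · rw [htr, h, h1]; push_cast; ring
  · have h1 : hM.eigenvalues 1 = ((Q₁ + Q₂) / 2 - k * ((B₁ + B₂) / 2)) + r := by linarith
    constructor
    · rw [h, h1]
      exact Multiset.pair_comm _ _
    · rw [htr, h, h1]; push_cast; ring
end

section
/- The discounted return on capital of a margined bilateral derivative trade equals the discounted return on the derivative adjusted by the two default options: let b, db, p, dp, c₁, c₂ be real numbers with b > 0 and b + db > 0. Define x₁ := c₁(1 + db/b) + (dp − (p/b)·db), x₂ := c₂(1 + db/b) − (dp − (p/b)·db), the final capital c₁ + dc₁ := (x₁)⁺ − (−x₂)⁺, and the discounted derivative return Δ := (p+dp)/(b+db) − p/b. Then (c₁ + dc₁)/(b + db) − c₁/b = (−c₁/b − Δ)⁺ − (Δ − c₂/b)⁺ + Δ, where x⁺ := max(x,0). -/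
/-- The discounted return on capital of a margined bilateral derivative trade equals the
discounted return on the derivative adjusted by the two default options:
`(c₁+dc₁)/(b+db) − c₁/b = (−c₁/b − Δ)⁺ − (Δ − c₂/b)⁺ + Δ` where
`Δ := (p+dp)/(b+db) − p/b` and `c₁+dc₁ := (x₁)⁺ − (−x₂)⁺`. -/
theorem discounted_return_on_capital (b db p dp c₁ c₂ : ℝ) (hb : 0 < b)
    (hbdb : 0 < b + db)
    (x₁ x₂ Δ : ℝ)
    (hx₁ : x₁ = c₁ * (1 + db / b) + (dp - (p / b) * db))
    (hx₂ : x₂ = c₂ * (1 + db / b) - (dp - (p / b) * db))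
    (hΔ : Δ = (p + dp) / (b + db) - p / b) :
    (max x₁ 0 - max (-x₂) 0) / (b + db) - c₁ / b =
      max (-(c₁ / b) - Δ) 0 - max (Δ - c₂ / b) 0 + Δ := by
  have e1 : x₁ / (b + db) = c₁ / b + Δ := by
    subst hx₁ hΔ; field_simp; ring
  have e2 : (-x₂) / (b + db) = Δ - c₂ / b := by
    subst hx₂ hΔ; field_simp; ring
  have h : (max x₁ 0 - max (-x₂) 0) / (b + db)
      = max (c₁ / b + Δ) 0 - max (Δ - c₂ / b) 0 := by
    rw [sub_div, ← max_div_div_right hbdb.le, ← max_div_div_right hbdb.le, zero_div, e1, e2]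
  rw [h]
  rcases max_cases (c₁ / b + Δ) 0 with ⟨h1, h1'⟩ | ⟨h1, h1'⟩ <;>
    rcases max_cases (-(c₁ / b) - Δ) 0 with ⟨h2, h2'⟩ | ⟨h2, h2'⟩ <;>
      linarith
end
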